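/- Let R be a commutative ring, n ≥ 1, and x_1,…,x_n ∈ R. Then det T(x_1,…,x_n) = Σ_{μ ∈ M(P_n)} (−1)^{|μ|} · Π_{v ∉ V(μ)} x_v, where the sum is over all matchings μ of the path graph P_n (including the empty matching) and the product is over the vertices of P_n not covered by μ. -/

import Mathlib

/-- `tridiag x n` is the `n × n` tridiagonal matrix `T(x_1, …, x_n)` whose `(i,i)`-entry
is `x (i+1)` (so the diagonal reads `x 1, …, x n`), whose `(i,j)`-entry is `-1` when
`|i - j| = 1`, and whose other entries are `0`; equivalently `diag(x) - A(P_n)` for the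
path graph `P_n`. -/
def tridiag {R : Type*} [CommRing R] (x : ℕ → R) (n : ℕ) :
    Matrix (Fin n) (Fin n) R :=
  Matrix.of fun i j =>
    if (i : ℕ) = j then x ((i : ℕ) + 1)
    else if (i : ℕ) + 1 = j ∨ (j : ℕ) + 1 = i then -1 else 0

/-- The matchings of the path graph `P_n` on vertices `0, …, n-1`: a matching is
encoded by the set `μ` of indices `i < n - 1` of its edges `{i, i+1}`, no two of
which may be consecutive. -/
def pathMatchings (n : ℕ) : Finset (Finset ℕ) :=
  (Finset.range (n - 1)).powerset.filter (fun μ => ∀ i ∈ μ, i + 1 ∉ μ)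

/-- The set of vertices of `P_n` covered by a matching `μ` (the edge with index `i`
covers vertices `i` and `i + 1`). -/
def coveredVertices (μ : Finset ℕ) : Finset ℕ :=
  μ ∪ μ.image (· + 1)

section Helpers
open Finset Matrix


lemma coe_succAbove {m : ℕ} (p : Fin (m+1)) (i : Fin m) :
    (p.succAbove i : ℕ) = if (i:ℕ) < (p:ℕ) then (i:ℕ) else (i:ℕ)+1 := by
  rw [Fin.succAbove]
  split_ifs with h h' h'
  · rfl
  · simp [Fin.lt_def] at h; exact absurd h h'
  · simp [Fin.lt_def] at h; omega
  · rfl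

lemma tridiag_det_rec {R : Type*} [CommRing R] (x : ℕ → R) (n : ℕ) :
    (tridiag x (n+2)).det = x (n+2) * (tridiag x (n+1)).det - (tridiag x n).det := by
  set b : Fin (n+2) := ⟨n, by omega⟩ with hb
  have hbv : (b : ℕ) = n := rfl
  have hba : b ≠ Fin.last (n+1) := fun h => by
    have : n = n + 1 := congrArg Fin.val h
    omega
  have hsub1 : (tridiag x (n+2)).submatrix Fin.castSucc Fin.castSucc = tridiag x (n+1) := by
    ext i j
    simp [tridiag, Matrix.submatrix_apply]
  have hM1 : ((tridiag x (n+2)).submatrix Fin.castSucc b.succAbove).det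
      = - (tridiag x n).det := by
    rw [Matrix.det_succ_column _ (Fin.last n),
        ← Finset.sum_subset (Finset.subset_univ ({Fin.last n} : Finset (Fin (n+1))))
          (fun i _ hi => ?_), Finset.sum_singleton]
    · have hent : (tridiag x (n+2)).submatrix Fin.castSucc b.succAbove (Fin.last n) (Fin.last n)
          = -1 := by
        simp only [Matrix.submatrix_apply, tridiag, Matrix.of_apply, coe_succAbove,
          Fin.coe_castSucc, Fin.val_last, hbv]
        split_ifs <;> first | rfl | omega | simp_all
      have hsub2 : ((tridiag x (n+2)).submatrix Fin.castSucc b.succAbove).submatrix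
          (Fin.last n).succAbove (Fin.last n).succAbove = tridiag x n := by
        rw [Fin.succAbove_last]
        ext i j
        have hj : (j : ℕ) < n := j.is_lt
        simp [tridiag, Matrix.submatrix_apply, coe_succAbove, hbv, hj]
      rw [hent, hsub2]
      have hev : (-1:R) ^ ((Fin.last n : ℕ) + (Fin.last n : ℕ)) = 1 :=
        Even.neg_one_pow ⟨n, by simp only [Fin.val_last]⟩
      rw [hev]
      ring
    · have hin : (i : ℕ) ≠ n := by
        simp only [Finset.mem_singleton] at hi
        intro h
        exact hi (Fin.ext (by simp [Fin.val_last, h]))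
      have hi2 : (i : ℕ) < n + 1 := i.is_lt
      have hent : (tridiag x (n+2)).submatrix Fin.castSucc b.succAbove i (Fin.last n) = 0 := by
        simp only [Matrix.submatrix_apply, tridiag, Matrix.of_apply, coe_succAbove,
          Fin.coe_castSucc, Fin.val_last, hbv]
        split_ifs <;> first | rfl | omega | simp_all
      rw [hent]
      ring
  rw [Matrix.det_succ_row _ (Fin.last (n+1)),
      ← Finset.sum_subset (Finset.subset_univ ({b, Fin.last (n+1)} : Finset (Fin (n+2))))
        (fun j _ hj => ?_), Finset.sum_pair hba]
  · have hAb : tridiag x (n+2) (Fin.last (n+1)) b = -1 := by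
      simp only [tridiag, Matrix.of_apply, Fin.val_last, hbv]
      split_ifs <;> first | rfl | omega | simp_all
    have hAa : tridiag x (n+2) (Fin.last (n+1)) (Fin.last (n+1)) = x (n+2) := by
      simp only [tridiag, Matrix.of_apply, Fin.val_last]
      split_ifs <;> first | rfl | omega | simp_all
    rw [hAb, hAa, Fin.succAbove_last, hsub1, hM1]
    have h1 : (-1:R) ^ ((Fin.last (n+1) : ℕ) + (b : ℕ)) = -1 :=
      Odd.neg_one_pow ⟨n, by simp only [Fin.val_last, hbv]; omega⟩
    have h2 : (-1:R) ^ ((Fin.last (n+1) : ℕ) + (Fin.last (n+1) : ℕ)) = 1 :=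
      Even.neg_one_pow ⟨n+1, by simp only [Fin.val_last]⟩
    rw [h1, h2]
    ring
  · have hj' : ¬(j = b ∨ j = Fin.last (n+1)) := by simpa using hj
    have hj1 : (j : ℕ) ≠ n := fun h => hj' (Or.inl (Fin.ext (by simp [hbv, h])))
    have hj2 : (j : ℕ) ≠ n + 1 := fun h =>
      hj' (Or.inr (Fin.ext (by simp [Fin.val_last, h])))
    have hjl : (j : ℕ) < n + 2 := j.is_lt
    have hent : tridiag x (n+2) (Fin.last (n+1)) j = 0 := by
      simp only [tridiag, Matrix.of_apply, Fin.val_last]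
      split_ifs <;> first | rfl | omega | simp_all
    rw [hent]
    ring

lemma pm_split (n : ℕ) :
    pathMatchings (n+2) = pathMatchings (n+1) ∪ (pathMatchings n).image (insert n) := by
  ext μ
  simp only [pathMatchings, mem_union, mem_image, mem_filter, mem_powerset]
  constructor
  · rintro ⟨hsub, hnc⟩
    by_cases hn : n ∈ μ
    · right
      refine ⟨μ.erase n, ⟨⟨?_, ?_⟩, ?_⟩⟩
      · intro k hk
        rcases Finset.mem_erase.mp hk with ⟨hkn, hkμ⟩
        have := hsub hkμ
        simp only [mem_range] at this ⊢
        rcases Nat.lt_or_ge k (n-1) with h | h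
        · exact h
        · exfalso
          have hk1 : k = n - 1 ∨ k = n := by omega
          rcases hk1 with rfl | rfl
          · have : n - 1 + 1 = n := by
              rcases Nat.eq_zero_or_pos n with rfl | hp
              · simp at hkμ; omega
              · omega
            exact hnc _ hkμ (this ▸ hn)
          · exact hkn rfl
      · intro i hi
        intro hi1
        exact hnc i (Finset.mem_of_mem_erase hi) (Finset.mem_of_mem_erase hi1)
      · exact Finset.insert_erase hn
    · left
      refine ⟨?_, hnc⟩
      intro k hk
      have := hsub hk
      simp only [mem_range] at this ⊢
      rcases Nat.lt_or_ge k n with h | h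
      · exact h
      · exfalso; have : k = n := by omega
        exact hn (this ▸ hk)
  · rintro (⟨hsub, hnc⟩ | ⟨ν, ⟨⟨hsub, hnc⟩, rfl⟩⟩)
    · exact ⟨fun k hk => by have := hsub hk; simp only [mem_range] at this ⊢; omega, hnc⟩
    · have hν : ∀ a ∈ ν, a < n - 1 := fun a ha => mem_range.mp (hsub ha)
      constructor
      · intro k hk
        rcases Finset.mem_insert.mp hk with rfl | hkν
        · simp only [mem_range]; omega
        · have := hν _ hkν; simp only [mem_range]; omega
      · intro i hi hi1
        rcases Finset.mem_insert.mp hi with rfl | hiν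
        · rcases Finset.mem_insert.mp hi1 with h | h
          · omega
          · have := hν _ h; omega
        · rcases Finset.mem_insert.mp hi1 with h | h
          · have := hν _ hiν; omega
          · exact hnc _ hiν h

theorem tridiag_det_eq_sum_all {R : Type*} [CommRing R] (x : ℕ → R) (n : ℕ) :
    (tridiag x n).det =
      ∑ μ ∈ pathMatchings n, (-1 : R) ^ μ.card *
        ∏ v ∈ Finset.range n \ coveredVertices μ, x (v + 1) := by
  induction n using Nat.strong_induction_on with
  | _ n ih =>
    match n with
    | 0 =>
      have h0 : pathMatchings 0 = {∅} := by decide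
      simp [h0, coveredVertices, Matrix.det_fin_zero]
    | 1 =>
      have h1 : pathMatchings 1 = {∅} := by decide
      simp [h1, coveredVertices, Matrix.det_fin_one, tridiag]
    | (n+2) =>
      rw [tridiag_det_rec, ih (n+1) (by omega), ih n (by omega), pm_split]
      rw [Finset.sum_union ?disj]
      case disj =>
        rw [Finset.disjoint_left]
        rintro μ hμ hμ'
        simp only [pathMatchings, mem_filter, mem_powerset] at hμ
        have hn : n ∉ μ := fun h => by have := mem_range.mp (hμ.1 h); omega
        rcases Finset.mem_image.mp hμ' with ⟨ν, _, rfl⟩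
        exact hn (Finset.mem_insert_self n ν)
      rw [Finset.sum_image ?inj]
      case inj =>
        intro a ha b hb hab
        have hna : n ∉ a := fun h => by
          simp only [Finset.mem_coe, pathMatchings, mem_filter, mem_powerset] at ha
          have := mem_range.mp (ha.1 h); omega
        have hnb : n ∉ b := fun h => by
          simp only [Finset.mem_coe, pathMatchings, mem_filter, mem_powerset] at hb
          have := mem_range.mp (hb.1 h); omega
        have := congrArg (fun s => Finset.erase s n) hab
        simpa [Finset.erase_insert hna, Finset.erase_insert hnb] using this
      have e1 : ∀ μ ∈ pathMatchings (n+1),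
          (-1 : R) ^ μ.card * ∏ v ∈ Finset.range (n+2) \ coveredVertices μ, x (v + 1)
          = x (n+2) * ((-1 : R) ^ μ.card * ∏ v ∈ Finset.range (n+1) \ coveredVertices μ, x (v + 1)) := by
        intro μ hμ
        simp only [pathMatchings, mem_filter, mem_powerset] at hμ
        have hlt : ∀ a ∈ μ, a < n := fun a ha => by
          have := mem_range.mp (hμ.1 ha); omega
        have hset : Finset.range (n+2) \ coveredVertices μ
            = insert (n+1) (Finset.range (n+1) \ coveredVertices μ) := by
          ext v
          simp only [Finset.mem_sdiff, mem_range, Finset.mem_insert, coveredVertices,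
            Finset.mem_union, Finset.mem_image]
          constructor
          · rintro ⟨hv, hnc⟩
            rcases Nat.lt_or_ge v (n+1) with h | h
            · exact Or.inr ⟨h, hnc⟩
            · left; omega
          · rintro (rfl | ⟨hv, hnc⟩)
            · refine ⟨by omega, ?_⟩
              push_neg
              exact ⟨fun h => by have := hlt _ h; omega,
                fun a ha => by have := hlt _ ha; omega⟩
            · exact ⟨by omega, hnc⟩
        have hnm : (n+1) ∉ Finset.range (n+1) \ coveredVertices μ := by
          simp [Finset.mem_sdiff]
        rw [hset, Finset.prod_insert hnm]
        ring
      have e2 : ∀ μ ∈ pathMatchings n,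
          (-1 : R) ^ (insert n μ).card *
            ∏ v ∈ Finset.range (n+2) \ coveredVertices (insert n μ), x (v + 1)
          = -((-1 : R) ^ μ.card * ∏ v ∈ Finset.range n \ coveredVertices μ, x (v + 1)) := by
        intro μ hμ
        simp only [pathMatchings, mem_filter, mem_powerset] at hμ
        have hlt : ∀ a ∈ μ, a < n - 1 := fun a ha => mem_range.mp (hμ.1 ha)
        have hn : n ∉ μ := fun h => by have := hlt _ h; omega
        have hcard : (insert n μ).card = μ.card + 1 := Finset.card_insert_of_notMem hn
        have hset : Finset.range (n+2) \ coveredVertices (insert n μ)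
            = Finset.range n \ coveredVertices μ := by
          ext v
          simp only [Finset.mem_sdiff, mem_range, coveredVertices, Finset.mem_union,
            Finset.mem_image, Finset.mem_insert]
          constructor
          · rintro ⟨hv, hnc⟩
            push_neg at hnc
            obtain ⟨⟨h1, h2⟩, h3⟩ := hnc
            have hvn : v ≠ n + 1 := fun h => (h3 n (Or.inl rfl)) (by omega)
            refine ⟨by omega, ?_⟩
            push_neg
            exact ⟨h2, fun a ha => h3 a (Or.inr ha)⟩
          · rintro ⟨hv, hnc⟩
            push_neg at hnc
            refine ⟨by omega, ?_⟩
            push_neg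
            refine ⟨⟨by omega, hnc.1⟩, ?_⟩
            rintro a (rfl | ha)
            · omega
            · exact hnc.2 a ha
        rw [hcard, hset]
        ring
      rw [Finset.sum_congr rfl e1, Finset.sum_congr rfl e2,
        ← Finset.mul_sum, Finset.sum_neg_distrib]
      ring


end Helpers

/-- `det T(x_1, …, x_n) = Σ_{μ ∈ M(P_n)} (-1)^{|μ|} Π_{v ∉ V(μ)} x_v`, the sum running
over all matchings of the path graph `P_n` (including the empty matching), the product
over the vertices of `P_n` not covered by `μ`. -/
theorem tridiag_det_eq_sum_matchings {R : Type*} [CommRing R] (x : ℕ → R) (n : ℕ)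
    (hn : 1 ≤ n) :
    (tridiag x n).det =
      ∑ μ ∈ pathMatchings n, (-1 : R) ^ μ.card *
        ∏ v ∈ Finset.range n \ coveredVertices μ, x (v + 1) := by
  exact tridiag_det_eq_sum_all x n
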